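/- Let D be a (v,k,1) planar cyclic difference set of order n = k − 1, and let t₁, t₂, t₃, t₄ be numerical multipliers of D with t₁ − t₂ ≡ t₃ − t₄ (mod v) and (t₁,t₂) ≠ (t₃,t₄) as suitable. Then v divides lcm(t₁ − t₂, t₁ − t₃). -/

import Mathlib

lemma evans_helper (v A B xv yv : ℕ) (hv0 : v ≠ 0)
    (hx : v ∣ A * xv) (hy : v ∣ B * yv)
    (h1 : (v : ℤ) ∣ (xv : ℤ) - yv - 1) : v ∣ Nat.lcm A B := by
  by_cases hA : A = 0
  · simp [hA]
  by_cases hB : B = 0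
  · simp [hB]
  rw [← Nat.factorization_le_iff_dvd hv0 (Nat.lcm_ne_zero hA hB)]
  intro p
  by_cases hp : p.Prime
  · set e := v.factorization p with he
    have hpe : p ^ e ∣ v := Nat.ordProj_dvd v p
    have key : p ^ e ∣ A ∨ p ^ e ∣ B := by
      by_contra hcon
      push_neg at hcon
      obtain ⟨hcA, hcB⟩ := hcon
      have he0 : e ≠ 0 := by
        intro h; rw [h, pow_zero] at hcA; exact hcA (one_dvd _)
      have hpv : p ∣ v := dvd_trans (dvd_pow_self p he0) hpe
      have hpx : p ∣ xv := by
        by_contra hpx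
        exact hcA ((((Nat.Prime.coprime_iff_not_dvd hp).mpr hpx).pow_left e).dvd_of_dvd_mul_right
          (dvd_trans hpe hx))
      have hpy : p ∣ yv := by
        by_contra hpy
        exact hcB ((((Nat.Prime.coprime_iff_not_dvd hp).mpr hpy).pow_left e).dvd_of_dvd_mul_right
          (dvd_trans hpe hy))
      have hz : (p : ℤ) ∣ (xv : ℤ) - yv - 1 := dvd_trans (Int.natCast_dvd_natCast.mpr hpv) h1
      have hzx : (p : ℤ) ∣ (xv : ℤ) := Int.natCast_dvd_natCast.mpr hpx
      have hzy : (p : ℤ) ∣ (yv : ℤ) := Int.natCast_dvd_natCast.mpr hpy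
      have h01 : (p : ℤ) ∣ 1 := by
        have := dvd_sub (dvd_sub hzx hzy) hz
        simpa using this
      have : p ∣ 1 := by exact_mod_cast h01
      exact Nat.Prime.one_lt hp |>.ne' (Nat.dvd_one.mp this)
    rw [Nat.factorization_lcm hA hB, Finsupp.sup_apply]
    rcases key with h | h
    · exact le_trans ((Nat.Prime.pow_dvd_iff_le_factorization hp hA).mp h) le_sup_left
    · exact le_trans ((Nat.Prime.pow_dvd_iff_le_factorization hp hB).mp h) le_sup_right
  · simp [Nat.factorization_eq_zero_of_not_prime v hp]

theorem evans_mann (v k : ℕ) [NeZero v] (D : Finset (ZMod v))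
    (hcard : D.card = k)
    (hdiff : ∀ g : ZMod v, g ≠ 0 →
      ((D ×ˢ D).filter (fun p => p.1 - p.2 = g)).card = 1)
    (t₁ t₂ t₃ t₄ : ℤ)
    (hmult : ∀ t ∈ ({t₁, t₂, t₃, t₄} : Set ℤ), Int.gcd t v = 1 ∧
      ∃ s : ZMod v, D.image (fun d => (t : ZMod v) * d)
        = D.image (fun d => d + s))
    (hcong : (v : ℤ) ∣ (t₁ - t₂) - (t₃ - t₄))
    (hne : (t₁, t₂) ≠ (t₃, t₄)) :
    (v : ℤ) ∣ lcm (t₁ - t₂) (t₁ - t₃) := by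
  have hv0 : v ≠ 0 := NeZero.ne v
  rcases eq_or_ne v 1 with hv1 | hv1
  · subst hv1
    exact one_dvd _
  -- (1 : ZMod v) ≠ 0
  have hone : (1 : ZMod v) ≠ 0 := by
    intro h
    have : (v : ℕ) ∣ 1 := by
      have := (CharP.cast_eq_zero_iff (ZMod v) v 1).mp (by simpa using h)
      exact this
    exact hv1 (Nat.dvd_one.mp this)
  -- Step A: counting, k*k = k + (v-1)
  have hsum : (D ×ˢ D).card
      = ∑ g : ZMod v, ((D ×ˢ D).filter (fun p => p.1 - p.2 = g)).card :=
    Finset.card_eq_sum_card_fiberwise (fun x _ => Finset.mem_univ _)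
  have hdiag : ((D ×ˢ D).filter (fun p => p.1 - p.2 = 0)) = D.image (fun d => (d, d)) := by
    ext ⟨x, y⟩
    simp only [Finset.mem_filter, Finset.mem_product, Finset.mem_image, sub_eq_zero]
    constructor
    · rintro ⟨⟨h1, h2⟩, h3⟩; exact ⟨x, h1, by rw [h3]⟩
    · rintro ⟨a, ha, h⟩; obtain ⟨rfl, rfl⟩ := Prod.mk.injEq .. ▸ h; aesop
  have hdiagcard : ((D ×ˢ D).filter (fun p => p.1 - p.2 = 0)).card = k := by
    rw [hdiag, Finset.card_image_of_injective _ (fun a b h => congrArg Prod.fst h), hcard]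
  have hcount : k * k = k + (v - 1) := by
    have h0mem : (0 : ZMod v) ∈ (Finset.univ : Finset (ZMod v)) := Finset.mem_univ _
    rw [Finset.card_product, hcard] at hsum
    rw [← Finset.add_sum_erase _ _ h0mem] at hsum
    have herase : ∑ g ∈ (Finset.univ : Finset (ZMod v)).erase 0,
        ((D ×ˢ D).filter (fun p => p.1 - p.2 = g)).card = v - 1 := by
      rw [Finset.sum_congr rfl (fun g hg => hdiff g (Finset.mem_erase.mp hg).1)]
      simp [Finset.card_erase_of_mem, ZMod.card]
    rw [hdiagcard, herase] at hsum
    omega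
  -- Step B: k is a unit mod v
  have hkv : Nat.Coprime k v := by
    have h1 : Nat.gcd k v ∣ k * k := Dvd.dvd.mul_right (Nat.gcd_dvd_left k v) k
    have h2 : Nat.gcd k v ∣ k + v := dvd_add (Nat.gcd_dvd_left k v) (Nat.gcd_dvd_right k v)
    have heq : k + v = k * k + 1 := by omega
    rw [heq] at h2
    exact Nat.dvd_one.mp (by simpa using Nat.dvd_sub h2 h1)
  set K : ZMod v := ((k : ℕ) : ZMod v) with hK
  have hKu : IsUnit K := (ZMod.isUnit_iff_coprime k v).mpr hkv
  -- units from gcd condition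
  have hunit : ∀ t : ℤ, Int.gcd t v = 1 → IsUnit ((t : ℤ) : ZMod v) := by
    intro t ht
    obtain ⟨u, w, huw⟩ := Int.isCoprime_iff_gcd_eq_one.mpr ht
    refine IsUnit.of_mul_eq_one ((u : ℤ) : ZMod v) ?_
    have : ((u * t + w * v : ℤ) : ZMod v) = ((1 : ℤ) : ZMod v) := by rw [huw]
    push_cast at this
    rw [ZMod.natCast_self] at this
    rw [mul_comm]
    simpa using this
  -- Step C: shift equations
  set S : ZMod v := ∑ d ∈ D, d with hS
  have key : ∀ t : ℤ, Int.gcd t v = 1 → ∀ s : ZMod v,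
      D.image (fun d => (t : ZMod v) * d) = D.image (fun d => d + s) →
      (t : ZMod v) * S = S + K * s := by
    intro t ht s himg
    have hinj1 : ∀ x ∈ D, ∀ y ∈ D, (t : ZMod v) * x = (t : ZMod v) * y → x = y := by
      intro x _ y _ h
      exact (hunit t ht).mul_left_cancel h
    have hinj2 : ∀ x ∈ D, ∀ y ∈ D, x + s = y + s → x = y := by
      intro x _ y _ h
      exact add_right_cancel h
    have h1 : ∑ x ∈ D.image (fun d => (t : ZMod v) * d), x = (t : ZMod v) * S := by
      rw [Finset.sum_image hinj1, hS, Finset.mul_sum]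
    have h2 : ∑ x ∈ D.image (fun d => d + s), x = S + K * s := by
      rw [Finset.sum_image hinj2, Finset.sum_add_distrib, Finset.sum_const, hcard,
        nsmul_eq_mul, hK, hS]
    rw [← h1, ← h2, himg]
  -- extract data for the four multipliers
  obtain ⟨hg1, s₁, himg₁⟩ := hmult t₁ (by simp)
  obtain ⟨hg2, s₂, himg₂⟩ := hmult t₂ (by simp)
  obtain ⟨hg3, s₃, himg₃⟩ := hmult t₃ (by simp)
  obtain ⟨hg4, s₄, himg₄⟩ := hmult t₄ (by simp)
  have eq₁ := key t₁ hg1 s₁ himg₁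
  have eq₂ := key t₂ hg2 s₂ himg₂
  have eq₃ := key t₃ hg3 s₃ himg₃
  have eq₄ := key t₄ hg4 s₄ himg₄
  set a : ZMod v := ((t₁ - t₂ : ℤ) : ZMod v) with ha
  set b : ZMod v := ((t₁ - t₃ : ℤ) : ZMod v) with hb
  have hc34 : ((t₃ - t₄ : ℤ) : ZMod v) = a := by
    have := (ZMod.intCast_zmod_eq_zero_iff_dvd ((t₁ - t₂) - (t₃ - t₄)) v).mpr hcong
    push_cast at this ⊢
    rw [ha]; push_cast
    linear_combination -this
  have hKs12 : K * (s₁ - s₂) = a * S := by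
    rw [ha]; push_cast
    linear_combination eq₂ - eq₁
  have hKs34 : K * (s₃ - s₄) = a * S := by
    rw [← hc34]; push_cast
    linear_combination eq₄ - eq₃
  have hKs13 : K * (s₁ - s₃) = b * S := by
    rw [hb]; push_cast
    linear_combination eq₃ - eq₁
  have hss : s₁ - s₂ = s₃ - s₄ := hKu.mul_left_cancel (by rw [hKs12, hKs34])
  -- the translation constant c
  obtain ⟨u, hu⟩ := id hKu
  set c : ZMod v := (↑u⁻¹ : ZMod v) * (-S) with hcdef
  have hKc : K * c = -S := by
    rw [hcdef, ← hu, ← mul_assoc, Units.mul_inv, one_mul]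
  have hac : a * c = -(s₁ - s₂) := by
    apply hKu.mul_left_cancel
    rw [show K * (a * c) = a * (K * c) by ring, hKc, mul_neg, ← hKs12]
    ring
  have hbc : b * c = -(s₁ - s₃) := by
    apply hKu.mul_left_cancel
    rw [show K * (b * c) = b * (K * c) by ring, hKc, mul_neg, ← hKs13]
    ring
  -- Step D: dichotomy
  have dich : ∀ d ∈ D, a * (d + c) = 0 ∨ b * (d + c) = 0 := by
    intro d hd
    by_cases h0 : a * (d + c) = 0
    · exact Or.inl h0
    right
    have mem : ∀ t : ℤ, ∀ s : ZMod v,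
        D.image (fun x => (t : ZMod v) * x) = D.image (fun x => x + s) →
        ∃ e ∈ D, e + s = (t : ZMod v) * d := by
      intro t s himg
      have h : (t : ZMod v) * d ∈ D.image (fun x => (t : ZMod v) * x) :=
        Finset.mem_image_of_mem _ hd
      rw [himg] at h
      obtain ⟨e, heD, he⟩ := Finset.mem_image.mp h
      exact ⟨e, heD, he⟩
    obtain ⟨e₁, he₁D, he₁⟩ := mem t₁ s₁ himg₁
    obtain ⟨e₂, he₂D, he₂⟩ := mem t₂ s₂ himg₂
    obtain ⟨e₃, he₃D, he₃⟩ := mem t₃ s₃ himg₃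
    obtain ⟨e₄, he₄D, he₄⟩ := mem t₄ s₄ himg₄
    have hval : a * (d + c) = a * d - (s₁ - s₂) := by
      rw [mul_add, hac]; ring
    have hpair1 : (e₁, e₂) ∈ (D ×ˢ D).filter (fun p => p.1 - p.2 = a * (d + c)) := by
      rw [Finset.mem_filter, Finset.mem_product]
      refine ⟨⟨he₁D, he₂D⟩, ?_⟩
      show e₁ - e₂ = a * (d + c)
      rw [hval, ha]; push_cast
      linear_combination he₁ - he₂
    have hpair2 : (e₃, e₄) ∈ (D ×ˢ D).filter (fun p => p.1 - p.2 = a * (d + c)) := by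
      rw [Finset.mem_filter, Finset.mem_product]
      refine ⟨⟨he₃D, he₄D⟩, ?_⟩
      show e₃ - e₄ = a * (d + c)
      rw [hval, hss, ← hc34]; push_cast
      linear_combination he₃ - he₄
    have huniq := Finset.card_le_one.mp (le_of_eq (hdiff _ h0)) _ hpair1 _ hpair2
    have he13 : e₁ = e₃ := congrArg Prod.fst huniq
    have h13 : (t₁ : ZMod v) * d - s₁ = (t₃ : ZMod v) * d - s₃ := by
      rw [← he₁, ← he₃, he13]; ring
    have hbd : b * d = s₁ - s₃ := by
      rw [hb]; push_cast
      linear_combination h13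
    rw [mul_add, hbd, hbc]
    ring
  -- Step E: a pair with difference 1
  have hpos : 0 < ((D ×ˢ D).filter (fun p => p.1 - p.2 = (1 : ZMod v))).card := by
    rw [hdiff 1 hone]; norm_num
  obtain ⟨⟨d, d'⟩, hp⟩ := Finset.card_pos.mp hpos
  rw [Finset.mem_filter, Finset.mem_product] at hp
  obtain ⟨⟨hdD, hd'D⟩, hdd'⟩ := hp
  have hdd1 : d - d' = 1 := hdd'
  set x : ZMod v := d + c with hx
  set y : ZMod v := d' + c with hy
  have hxy : x - y = 1 := by rw [hx, hy]; rw [show d + c - (d' + c) = d - d' by ring, hdd1]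
  -- lift facts
  have hvalx : ((x.val : ℕ) : ZMod v) = x := ZMod.natCast_rightInverse x
  have hvaly : ((y.val : ℕ) : ZMod v) = y := ZMod.natCast_rightInverse y
  have hxy1 : (v : ℤ) ∣ (x.val : ℤ) - y.val - 1 := by
    rw [← ZMod.intCast_zmod_eq_zero_iff_dvd]
    push_cast
    rw [hvalx, hvaly, hxy]
    ring
  -- converting annihilation to ℕ divisibility
  have toNat : ∀ (w : ℤ) (z : ZMod v), ((w : ℤ) : ZMod v) * z = 0 →
      v ∣ w.natAbs * z.val := by
    intro w z h
    have : ((w * (z.val : ℕ) : ℤ) : ZMod v) = 0 := by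
      push_cast
      rw [ZMod.natCast_rightInverse z]
      exact h
    have hdvd : (v : ℤ) ∣ w * (z.val : ℕ) := (ZMod.intCast_zmod_eq_zero_iff_dvd _ v).mp this
    simpa only [Int.natAbs_mul, Int.natAbs_natCast] using Int.natAbs_dvd_natAbs.mpr hdvd
  -- final case analysis
  have lcm_cast : (↑(Nat.lcm (t₁ - t₂).natAbs (t₁ - t₃).natAbs) : ℤ)
      = lcm (t₁ - t₂) (t₁ - t₃) := by
    rw [← Int.coe_lcm]
    rfl
  obtain hdx | hdx := dich d hdD <;> obtain hdy | hdy := dich d' hd'D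
  · -- a*x = 0 and a*y = 0 ⇒ v ∣ t₁ - t₂
    have : a = 0 := by
      have := sub_eq_zero.mpr (rfl : a * x = a * x)
      calc a = a * x - a * y := by rw [← mul_sub, hxy, mul_one]
        _ = 0 := by rw [hdx, hdy, sub_zero]
    exact dvd_trans ((ZMod.intCast_zmod_eq_zero_iff_dvd _ v).mp this) (dvd_lcm_left _ _)
  · -- a*x = 0, b*y = 0 : mixed
    have h1 := toNat _ _ hdx
    have h2 := toNat _ _ hdy
    have := evans_helper v (t₁ - t₂).natAbs (t₁ - t₃).natAbs x.val y.val hv0 h1 h2 hxy1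
    rw [← lcm_cast]
    exact_mod_cast Int.natCast_dvd_natCast.mpr this
  · -- b*x = 0, a*y = 0 : mixed swapped
    have h1 := toNat _ _ hdx
    have h2 := toNat _ _ hdy
    have := evans_helper v (t₁ - t₃).natAbs (t₁ - t₂).natAbs x.val y.val hv0 h1 h2 hxy1
    rw [Nat.lcm_comm] at this
    rw [← lcm_cast]
    exact_mod_cast Int.natCast_dvd_natCast.mpr this
  · -- b*x = 0 and b*y = 0 ⇒ v ∣ t₁ - t₃
    have : b = 0 := by
      calc b = b * x - b * y := by rw [← mul_sub, hxy, mul_one]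
        _ = 0 := by rw [hdx, hdy, sub_zero]
    exact dvd_trans ((ZMod.intCast_zmod_eq_zero_iff_dvd _ v).mp this) (dvd_lcm_right _ _)
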